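/- Let X be a real vector space equipped with the core convex topology τ_c, and let {x_i}_{i∈I} be a Hamel basis of X. Then 0 does not belong to the τ_c-closure of the set {x_i : i ∈ I}. -/

import Mathlib

open Pointwise

/-- Algebraic interior (core) of a set `A` in a real vector space:
`cor A = {x ∈ A | ∀ d, ∃ δ > 0, ∀ λ ∈ [0, δ], x + λ • d ∈ A}`. -/
def cor {X : Type*} [AddCommGroup X] [Module ℝ X] (A : Set X) : Set X :=
  {x | x ∈ A ∧ ∀ d : X, ∃ δ : ℝ, 0 < δ ∧ ∀ lam ∈ Set.Icc (0 : ℝ) δ, x + lam • d ∈ A}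

/-- Relative algebraic interior of `A`: directions are taken in `L(A) = span (A - A)`. -/
def icr {X : Type*} [AddCommGroup X] [Module ℝ X] (A : Set X) : Set X :=
  {x | x ∈ A ∧ ∀ d ∈ Submodule.span ℝ (A - A),
    ∃ δ : ℝ, 0 < δ ∧ ∀ lam ∈ Set.Icc (0 : ℝ) δ, x + lam • d ∈ A}

/-- Vectorial closure of `A`:
`vcl A = {b | ∃ d, ∀ δ > 0, ∃ λ ∈ [0, δ], b + λ • d ∈ A}`. -/
def vcl {X : Type*} [AddCommGroup X] [Module ℝ X] (A : Set X) : Set X :=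
  {b | ∃ d : X, ∀ δ : ℝ, 0 < δ → ∃ lam ∈ Set.Icc (0 : ℝ) δ, b + lam • d ∈ A}

/-- The core convex topology `τ_c`: the topology whose open sets are the unions of
members of `𝔅 = {A | A convex and cor A = A}`; since `𝔅` is a topological basis
(closed under binary intersection, contains `X` and `∅`), this is the topology
generated by `𝔅`. -/
def tauc (X : Type*) [AddCommGroup X] [Module ℝ X] : TopologicalSpace X :=
  TopologicalSpace.generateFrom {A : Set X | Convex ℝ A ∧ cor A = A}

/-- If `{x i}` is a Hamel basis of `X`, then `0` is not in the
`τ_c`-closure of the set of basis vectors. -/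
theorem stmt14 {X : Type*} [AddCommGroup X] [Module ℝ X] {ι : Type*} (e : Module.Basis ι ℝ X) :
    (0 : X) ∉ @closure X (tauc X) (Set.range e) := by
  classical
  letI : TopologicalSpace X := tauc X
  set f : (ι →₀ ℝ) → ℝ := fun g => g.sum fun _ a => |a| with hf
  have hext : ∀ (g : ι →₀ ℝ) (s : Finset ι), g.support ⊆ s → f g = ∑ i ∈ s, |g i| := by
    intro g s hs
    exact Finsupp.sum_of_support_subset g hs _ (fun i _ => abs_zero)
  have hadd : ∀ g h : ι →₀ ℝ, f (g + h) ≤ f g + f h := by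
    intro g h
    have h1 : f (g + h) = ∑ i ∈ g.support ∪ h.support, |g i + h i| := by
      have := hext (g + h) (g.support ∪ h.support) (Finsupp.support_add)
      simpa using this
    rw [h1, hext g (g.support ∪ h.support) Finset.subset_union_left,
      hext h (g.support ∪ h.support) Finset.subset_union_right, ← Finset.sum_add_distrib]
    exact Finset.sum_le_sum fun i _ => abs_add_le _ _
  have hsmul : ∀ (c : ℝ) (g : ι →₀ ℝ), f (c • g) = |c| * f g := by
    intro c g
    rw [hext (c • g) g.support (Finsupp.support_smul),
      hext g g.support (le_refl _), Finset.mul_sum]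
    refine Finset.sum_congr rfl fun i _ => ?_
    simp [abs_mul]
  set U : Set X := {x | f (e.repr x) < 1} with hU
  have hU0 : (0 : X) ∈ U := by
    simp only [hU, Set.mem_setOf_eq, map_zero, hf, Finsupp.sum_zero_index]
    norm_num
  have hconv : Convex ℝ U := by
    intro x hx y hy a b ha hb hab
    have hx' : f (e.repr x) < 1 := hx
    have hy' : f (e.repr y) < 1 := hy
    set m := max (f (e.repr x)) (f (e.repr y)) with hm
    have hm1 : m < 1 := max_lt hx' hy'
    show f (e.repr (a • x + b • y)) < 1
    have h1 : f (e.repr (a • x + b • y)) ≤ a * f (e.repr x) + b * f (e.repr y) := by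
      rw [map_add, map_smul, map_smul]
      calc f (a • e.repr x + b • e.repr y)
          ≤ f (a • e.repr x) + f (b • e.repr y) := hadd _ _
        _ = |a| * f (e.repr x) + |b| * f (e.repr y) := by rw [hsmul, hsmul]
        _ = a * f (e.repr x) + b * f (e.repr y) := by
            rw [abs_of_nonneg ha, abs_of_nonneg hb]
    have h2 : a * f (e.repr x) + b * f (e.repr y) ≤ a * m + b * m := by
      gcongr
      · exact le_max_left _ _
      · exact le_max_right _ _
    have h3 : a * m + b * m = m := by rw [← add_mul, hab, one_mul]
    linarith
  have hcor : cor U = U := by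
    refine Set.Subset.antisymm (fun x hx => hx.1) (fun x hx => ⟨hx, fun d => ?_⟩)
    have hx' : f (e.repr x) < 1 := hx
    set M := f (e.repr d) with hM
    have hMnn : 0 ≤ M := Finset.sum_nonneg fun i _ => abs_nonneg _
    refine ⟨(1 - f (e.repr x)) / (M + 1), div_pos (by linarith) (by linarith), ?_⟩
    rintro lam ⟨hlam0, hlamδ⟩
    show f (e.repr (x + lam • d)) < 1
    have h1 : f (e.repr (x + lam • d)) ≤ f (e.repr x) + lam * M := by
      rw [map_add, map_smul]
      calc f (e.repr x + lam • e.repr d)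
          ≤ f (e.repr x) + f (lam • e.repr d) := hadd _ _
        _ = f (e.repr x) + |lam| * M := by rw [hsmul]
        _ = f (e.repr x) + lam * M := by rw [abs_of_nonneg hlam0]
    have h2 : lam * M ≤ (1 - f (e.repr x)) / (M + 1) * M := by
      gcongr
    have h3 : (1 - f (e.repr x)) / (M + 1) * M < 1 - f (e.repr x) := by
      rw [div_mul_eq_mul_div, div_lt_iff₀ (by linarith)]
      nlinarith
    linarith
  have hopen : IsOpen U :=
    TopologicalSpace.isOpen_generateFrom_of_mem ⟨hconv, hcor⟩
  intro h
  obtain ⟨y, hyU, hyr⟩ := mem_closure_iff.1 h U hopen hU0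
  obtain ⟨i, rfl⟩ := hyr
  have : f (e.repr (e i)) = 1 := by
    rw [Module.Basis.repr_self]
    simp [hf, Finsupp.sum_single_index]
  have hlt : f (e.repr (e i)) < 1 := hyU
  linarith
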